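/- Let S and A be finite nonempty sets, let d : S → ℝ be an initial distribution with d(s) > 0 for all s and ∑_s d(s) = 1, let T be a transition kernel (T(s'|s,a) ≥ 0, ∑_{s'} T(s'|s,a) = 1), let γ ∈ [0,1), let α > 0, let φ : S × A → ℝ^m be a feature map, and let ρ_E ∈ M. Then ρ ∈ M with ∑_{s,a} ρ(s,a)·φ(s,a) = ∑_{s,a} ρ_E(s,a)·φ(s,a) maximizes W̄ over the set {ρ' ∈ M : ∑_{s,a} ρ'(s,a)·φ(s,a) = ∑_{s,a} ρ_E(s,a)·φ(s,a)} if and only if there exist θ ∈ ℝ^m and c : S → ℝ such that, defining q(s,a) = ⟨θ, φ(s,a)⟩ + γ·∑_{s'} c(s')·T(s'|s,a) and π_ρ(a|s) = ρ(s,a)/∑_{a'} ρ(s,a'), one has for all s, a: (i) π_ρ(a|s) = max(q(s,a)/α − τ(q(s,·)/α), 0), and (ii) c(s) = α·[ (1/2)·∑_{a ∈ S(s)} ( (q(s,a)/α)² − τ(q(s,·)/α)² ) + 1/2 ], where S(s) = {a : π_ρ(a|s) > 0} and τ is the sparsemax threshold. (Theorem 4 of the paper.) -/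

import Mathlib

open Finset

/-- Causal Tsallis entropy of a state-action visitation measure
(the ratio is `0` when the denominator is `0`, by Lean's division convention). -/
noncomputable def Wbar {S A : Type*} [Fintype S] [Fintype A] (ρ : S → A → ℝ) : ℝ :=
  (1 / 2) * ∑ s, ∑ a, ρ s a * (1 - ρ s a / ∑ a', ρ s a')

noncomputable def piF {S A : Type*} [Fintype A] (ρ : S → A → ℝ) (s : S) (a : A) : ℝ :=
  ρ s a / ∑ a', ρ s a'

noncomputable def NF {S A : Type*} [Fintype A] (ρ : S → A → ℝ) (s : S) : ℝ :=
  ∑ a, (piF ρ s a) ^ 2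

noncomputable def GF {S A : Type*} [Fintype A] (ρ : S → A → ℝ) (s : S) (a : A) : ℝ :=
  1 - 2 * piF ρ s a + NF ρ s


lemma sum_comb {A : Type*} [Fintype A] (c1 c2 c3 c4 c5 : ℝ) (x y : A → ℝ) :
    ∑ a, (c1 * x a + c2 * y a + c3 * x a ^ 2 + c4 * y a ^ 2 + c5 * (x a * y a))
    = c1 * ∑ a, x a + c2 * ∑ a, y a + c3 * ∑ a, x a ^ 2 + c4 * ∑ a, y a ^ 2
      + c5 * ∑ a, x a * y a := by
  simp [Finset.sum_add_distrib, Finset.mul_sum]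

/-- Exact second-order expansion of the per-state Tsallis term. -/
lemma key_ident {A : Type*} [Fintype A] (x y : A → ℝ)
    (hmx : (∑ a, x a) ≠ 0) (hmy : (∑ a, y a) ≠ 0) :
    ∑ a, y a * (1 - y a / ∑ a', y a')
    = ∑ a, x a * (1 - x a / ∑ a', x a')
      + ∑ a, ((1 - 2 * (x a / ∑ a', x a') + ∑ a', (x a' / ∑ a'', x a'') ^ 2) * (y a - x a))
      - ∑ a, (y a - x a / (∑ a', x a') * ∑ a', y a') ^ 2 / (∑ a', y a') := by
  set mx : ℝ := ∑ a, x a with hmxd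
  set my : ℝ := ∑ a, y a with hmyd
  have hN : (∑ a', (x a' / mx) ^ 2) = (∑ a, x a ^ 2) / mx ^ 2 := by
    rw [Finset.sum_div]
    exact Finset.sum_congr rfl (fun a _ => by rw [div_pow])
  have e1 : ∑ a, y a * (1 - y a / my)
      = my - (1 / my) * ∑ a, y a ^ 2 := by
    have : ∀ a ∈ (univ : Finset A), y a * (1 - y a / my)
        = 0 * x a + 1 * y a + 0 * x a ^ 2 + (-(1 / my)) * y a ^ 2 + 0 * (x a * y a) := by
      intro a _; ring
    rw [Finset.sum_congr rfl this, sum_comb]; ring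
  have e2 : ∑ a, x a * (1 - x a / mx)
      = mx - (1 / mx) * ∑ a, x a ^ 2 := by
    have : ∀ a ∈ (univ : Finset A), x a * (1 - x a / mx)
        = 1 * x a + 0 * y a + (-(1 / mx)) * x a ^ 2 + 0 * y a ^ 2 + 0 * (x a * y a) := by
      intro a _; ring
    rw [Finset.sum_congr rfl this, sum_comb]; ring
  have e3 : ∑ a, ((1 - 2 * (x a / mx) + (∑ a, x a ^ 2) / mx ^ 2) * (y a - x a))
      = (-1 - (∑ a, x a ^ 2) / mx ^ 2) * mx + (1 + (∑ a, x a ^ 2) / mx ^ 2) * my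
        + (2 / mx) * ∑ a, x a ^ 2 + (-(2 / mx)) * ∑ a, x a * y a := by
    have : ∀ a ∈ (univ : Finset A), (1 - 2 * (x a / mx) + (∑ a, x a ^ 2) / mx ^ 2) * (y a - x a)
        = (-1 - (∑ a, x a ^ 2) / mx ^ 2) * x a + (1 + (∑ a, x a ^ 2) / mx ^ 2) * y a
          + (2 / mx) * x a ^ 2 + 0 * y a ^ 2 + (-(2 / mx)) * (x a * y a) := by
      intro a _; ring
    rw [Finset.sum_congr rfl this, sum_comb]; ring
  have e4 : ∑ a, (y a - x a / mx * my) ^ 2 / my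
      = (my ^ 2 / mx ^ 2 / my) * ∑ a, x a ^ 2 + (1 / my) * ∑ a, y a ^ 2
        + (-(2 / mx)) * ∑ a, x a * y a := by
    have : ∀ a ∈ (univ : Finset A), (y a - x a / mx * my) ^ 2 / my
        = 0 * x a + 0 * y a + (my ^ 2 / mx ^ 2 / my) * x a ^ 2 + (1 / my) * y a ^ 2
          + (-(2 * my / mx / my)) * (x a * y a) := by
      intro a _; field_simp; ring
    rw [Finset.sum_congr rfl this, sum_comb]
    have : -(2 * my / mx / my) = -(2 / mx) := by field_simp
    rw [this]; ring
  rw [e1, e2, hN, e3, e4]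
  field_simp
  ring

lemma farkas_aux {n ι : Type*} [Fintype n] [DecidableEq ι] (s : Finset ι) :
    ∀ (u : ι → n → ℝ) (g : n → ℝ),
      (∀ y : n → ℝ, (∀ i ∈ s, ∑ p, u i p * y p ≤ 0) → ∑ p, g p * y p ≤ 0) →
      ∃ lam : ι → ℝ, (∀ i, 0 ≤ lam i) ∧ (∀ p, g p = ∑ i ∈ s, lam i * u i p) := by
  induction s using Finset.induction_on with
  | empty =>
    intro u g h
    have h0 : ∀ p : n, g p = 0 := by
      have hg := h g (by simp)
      intro p
      have hterm : ∀ q : n, 0 ≤ g q * g q := fun q => mul_self_nonneg _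
      have := (Finset.sum_eq_zero_iff_of_nonneg (fun q _ => hterm q)).1
        (le_antisymm hg (Finset.sum_nonneg (fun q _ => hterm q))) p (mem_univ p)
      exact mul_self_eq_zero.1 this
    exact ⟨0, fun i => le_refl 0, fun p => by simp [h0 p]⟩
  | insert a s ha ih =>
    intro u g h
    by_cases hc : ∀ y : n → ℝ, (∀ i ∈ s, ∑ p, u i p * y p ≤ 0) → ∑ p, g p * y p ≤ 0
    · obtain ⟨lam, hpos, hrep⟩ := ih u g hc
      refine ⟨fun i => if i ∈ s then lam i else 0, fun i => ?_, fun p => ?_⟩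
      · dsimp only
        by_cases hi : i ∈ s
        · rw [if_pos hi]; exact hpos i
        · rw [if_neg hi]
      · dsimp only
        rw [Finset.sum_insert ha, if_neg ha, zero_mul, zero_add, hrep p]
        exact Finset.sum_congr rfl (fun i hi => by rw [if_pos hi])
    · push_neg at hc
      obtain ⟨y₀, hy₀s, hgy₀⟩ := hc
      have hV : 0 < ∑ p, u a p * y₀ p := by
        by_contra hV
        push_neg at hV
        have := h y₀ (by
          intro i hi
          rcases Finset.mem_insert.1 hi with hia | hi
          · rw [hia]; exact hV
          · exact hy₀s i hi)
        exact absurd hgy₀ (not_lt.2 this)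
      set V : ℝ := ∑ p, u a p * y₀ p with hVdef
      have key : ∀ (w y : n → ℝ),
          ∑ p, w p * (y p - (∑ q, u a q * y q) / V * y₀ p)
          = ∑ p, (w p - (∑ q, w q * y₀ q) / V * u a p) * y p := by
        intro w y
        have l1 : ∑ p, w p * (y p - (∑ q, u a q * y q) / V * y₀ p)
            = ∑ p, w p * y p - (∑ q, u a q * y q) / V * ∑ p, w p * y₀ p := by
          rw [Finset.mul_sum, ← Finset.sum_sub_distrib]
          exact Finset.sum_congr rfl (fun p _ => by ring)
        have l2 : ∑ p, (w p - (∑ q, w q * y₀ q) / V * u a p) * y p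
            = ∑ p, w p * y p - (∑ q, w q * y₀ q) / V * ∑ p, u a p * y p := by
          rw [Finset.mul_sum, ← Finset.sum_sub_distrib]
          exact Finset.sum_congr rfl (fun p _ => by ring)
        rw [l1, l2]; ring
      set u' : ι → n → ℝ := fun i p => u i p - (∑ q, u i q * y₀ q) / V * u a p with hu'
      set g' : n → ℝ := fun p => g p - (∑ q, g q * y₀ q) / V * u a p with hg'
      have hyp' : ∀ y : n → ℝ, (∀ i ∈ s, ∑ p, u' i p * y p ≤ 0) → ∑ p, g' p * y p ≤ 0 := by
        intro y hy
        set yh : n → ℝ := fun p => y p - (∑ q, u a q * y q) / V * y₀ p with hyh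
        have hmain := h yh (by
          intro i hi
          rcases Finset.mem_insert.1 hi with hia | hi
          · subst hia
            have h1 : ∑ p, u i p * yh p
                = ∑ p, (u i p - (∑ q, u i q * y₀ q) / V * u i p) * y p := key (u i) y
            rw [h1]
            have h2 : ∀ p, u i p - (∑ q, u i q * y₀ q) / V * u i p = 0 := by
              intro p
              rw [← hVdef, div_self (ne_of_gt hV)]; ring
            simp [h2]
          · have h1 : ∑ p, u i p * yh p = ∑ p, u' i p * y p := key (u i) y
            rw [h1]
            exact hy i hi)
        have h2 : ∑ p, g p * yh p = ∑ p, g' p * y p := key g y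
        rw [← h2]; exact hmain
      obtain ⟨lam, hpos, hrep⟩ := ih u' g' hyp'
      set cg : ℝ := (∑ q, g q * y₀ q) / V with hcg
      set ci : ι → ℝ := fun i => (∑ q, u i q * y₀ q) / V with hci
      have hcgpos : 0 < cg := div_pos hgy₀ hV
      have hcineg : ∀ i ∈ s, ci i ≤ 0 := fun i hi =>
        div_nonpos_of_nonpos_of_nonneg (hy₀s i hi) hV.le
      refine ⟨Function.update lam a (cg - ∑ i ∈ s, lam i * ci i), ?_, ?_⟩
      · intro i
        rcases eq_or_ne i a with rfl | hne
        · rw [Function.update_self]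
          have hsum : ∑ j ∈ s, lam j * ci j ≤ 0 :=
            Finset.sum_nonpos (fun j hj =>
              mul_nonpos_of_nonneg_of_nonpos (hpos j) (hcineg j hj))
          linarith
        · rw [Function.update_of_ne hne]; exact hpos i
      · intro p
        rw [Finset.sum_insert ha, Function.update_self]
        have hrw : ∀ i ∈ s, Function.update lam a (cg - ∑ i ∈ s, lam i * ci i) i * u i p
            = lam i * u i p := by
          intro i hi
          have hne : i ≠ a := fun hia => ha (hia ▸ hi)
          rw [Function.update_of_ne hne]
        rw [Finset.sum_congr rfl hrw]
        have hexp : ∑ i ∈ s, lam i * u i p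
            = ∑ i ∈ s, lam i * u' i p + (∑ i ∈ s, lam i * ci i) * u a p := by
          rw [Finset.sum_mul, ← Finset.sum_add_distrib]
          refine Finset.sum_congr rfl (fun i hi => ?_)
          simp only [hu', hci]; ring
        rw [hexp, ← hrep p]
        simp only [hg', hcg]; ring

lemma farkas {n ι : Type*} [Fintype n] [Fintype ι] (u : ι → n → ℝ) (g : n → ℝ)
    (h : ∀ y : n → ℝ, (∀ i, ∑ p, u i p * y p ≤ 0) → ∑ p, g p * y p ≤ 0) :
    ∃ lam : ι → ℝ, (∀ i, 0 ≤ lam i) ∧ (∀ p, g p = ∑ i, lam i * u i p) := by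
  classical
  exact farkas_aux Finset.univ u g (fun y hy => h y (fun i => hy i (mem_univ i)))

/-- choosing a uniform small step size keeping nonnegativity -/
lemma eps_lemma {n : Type*} [Fintype n] (x v : n → ℝ) (hx : ∀ p, 0 ≤ x p)
    (h : ∀ p, x p = 0 → 0 ≤ v p) :
    ∃ ε : ℝ, 0 < ε ∧ ε ≤ 1 ∧ ∀ t, 0 ≤ t → t ≤ ε → ∀ p, 0 ≤ x p + t * v p := by
  classical
  set F : Finset n := Finset.univ.filter (fun p => v p < 0) with hF
  by_cases hFne : F.Nonempty
  · refine ⟨min 1 (F.inf' hFne (fun p => x p / (-v p))), ?_, min_le_left _ _, ?_⟩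
    · refine lt_min one_pos ?_
      rw [Finset.lt_inf'_iff]
      intro p hp
      have hvp : v p < 0 := (Finset.mem_filter.1 hp).2
      have hxp : 0 < x p := by
        rcases lt_or_eq_of_le (hx p) with h' | h'
        · exact h'
        · exact absurd (h p h'.symm) (not_le.2 hvp)
      exact div_pos hxp (by linarith)
    · intro t ht0 htε p
      rcases le_or_gt 0 (v p) with hv | hv
      · exact add_nonneg (hx p) (mul_nonneg ht0 hv)
      · have hp : p ∈ F := Finset.mem_filter.2 ⟨mem_univ p, hv⟩
        have h1 : t ≤ x p / (-v p) :=
          le_trans htε (le_trans (min_le_right _ _) (Finset.inf'_le _ hp))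
        have h2 : t * (-v p) ≤ x p := by
          rw [← le_div_iff₀ (by linarith : (0:ℝ) < -v p)]
          exact h1
        nlinarith
  · refine ⟨1, one_pos, le_refl 1, fun t ht0 _ p => ?_⟩
    have : ¬ v p < 0 := by
      intro hv
      exact hFne ⟨p, Finset.mem_filter.2 ⟨mem_univ p, hv⟩⟩
    exact add_nonneg (hx p) (mul_nonneg ht0 (not_lt.1 this))

lemma le_zero_of_small (L K ε : ℝ) (hK : 0 ≤ K) (hε : 0 < ε)
    (h : ∀ t, 0 < t → t ≤ ε → L ≤ t * K) : L ≤ 0 := by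
  by_contra hL
  push_neg at hL
  have hd : (0:ℝ) < 2 * (K + 1) := by linarith
  set t := min ε (L / (2 * (K + 1))) with ht
  have ht0 : 0 < t := lt_min hε (div_pos hL hd)
  have h1 : L ≤ t * K := h t ht0 (min_le_left _ _)
  have h2 : t * K ≤ (L / (2 * (K + 1))) * K :=
    mul_le_mul_of_nonneg_right (min_le_right _ _) hK
  have h3 : (L / (2 * (K + 1))) * K < L := by
    rw [div_mul_eq_mul_div, div_lt_iff₀ hd]
    nlinarith
  linarith

lemma filter_sum {A : Type*} [Fintype A] (pi q : A → ℝ) (t : ℝ)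
    (hsum1 : ∑ a, pi a = 1) (hpos : ∀ a, 0 ≤ pi a)
    (h : ∀ a, 0 < pi a → q a = pi a + t) :
    ∑ a ∈ Finset.univ.filter (fun a => 0 < pi a), ((q a) ^ 2 - t ^ 2)
      = (∑ a, (pi a) ^ 2) + 2 * t := by
  classical
  have h1 : ∀ a ∈ Finset.univ.filter (fun a => 0 < pi a),
      (q a) ^ 2 - t ^ 2 = (pi a) ^ 2 + 2 * t * pi a := by
    intro a ha
    have hpa : 0 < pi a := (Finset.mem_filter.1 ha).2
    rw [h a hpa]; ring
  rw [Finset.sum_congr rfl h1]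
  rw [Finset.sum_subset (Finset.filter_subset _ _) (by
    intro a _ ha
    have : ¬ 0 < pi a := by
      intro hpa
      exact ha (Finset.mem_filter.2 ⟨mem_univ a, hpa⟩)
    have hz : pi a = 0 := le_antisymm (not_lt.1 this) (hpos a)
    rw [hz]; ring)]
  rw [Finset.sum_add_distrib, ← Finset.mul_sum, hsum1]
  ring

lemma wbar_expand {S A : Type*} [Fintype S] [Fintype A] (ρ ρ' : S → A → ℝ)
    (h1 : ∀ s, (∑ a, ρ s a) ≠ 0) (h2 : ∀ s, (∑ a, ρ' s a) ≠ 0) :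
    Wbar ρ' = Wbar ρ + (1 / 2) * ∑ s, ∑ a, GF ρ s a * (ρ' s a - ρ s a)
      - (1 / 2) * ∑ s, ∑ a, (ρ' s a - piF ρ s a * ∑ a', ρ' s a') ^ 2 / (∑ a', ρ' s a') := by
  unfold Wbar
  have hper : ∀ s ∈ (univ : Finset S),
      ∑ a, ρ' s a * (1 - ρ' s a / ∑ a', ρ' s a')
      = ∑ a, ρ s a * (1 - ρ s a / ∑ a', ρ s a')
        + ∑ a, GF ρ s a * (ρ' s a - ρ s a)
        - ∑ a, (ρ' s a - piF ρ s a * ∑ a', ρ' s a') ^ 2 / (∑ a', ρ' s a') := by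
    intro s _
    have := key_ident (ρ s) (ρ' s) (h1 s) (h2 s)
    simpa [GF, NF, piF] using this
  rw [Finset.sum_congr rfl hper, Finset.sum_sub_distrib, Finset.sum_add_distrib]
  ring

/-- Theorem 4: `ρ` in the Bellman flow polytope satisfying the feature-matching
constraint maximizes `W̄` over the feasible set iff there exist multipliers
`θ, c` such that the induced policy is the sparsemax distribution of
`q(s,·)/α` and `c` satisfies the sparse Bellman closed form. -/
theorem stmt8 {S A : Type*} [Fintype S] [Fintype A] [Nonempty S] [Nonempty A]
    (m : ℕ)
    (d : S → ℝ) (hd : ∀ s, 0 < d s) (hdsum : ∑ s, d s = 1)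
    (T : S → S → A → ℝ) (hT0 : ∀ s' s a, 0 ≤ T s' s a) (hT1 : ∀ s a, ∑ s', T s' s a = 1)
    (γ : ℝ) (hγ0 : 0 ≤ γ) (hγ1 : γ < 1)
    (α : ℝ) (hα : 0 < α)
    (φ : S → A → Fin m → ℝ)
    (M : Set (S → A → ℝ))
    (hM : M = {ρ' | (∀ s a, 0 ≤ ρ' s a) ∧
      ∀ s, ∑ a, ρ' s a = d s + γ * ∑ s', ∑ a', T s s' a' * ρ' s' a'})
    (ρE : S → A → ℝ) (hρE : ρE ∈ M)
    (ρ : S → A → ℝ) (hρ : ρ ∈ M)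
    (hfeat : ∀ i, ∑ s, ∑ a, ρ s a * φ s a i = ∑ s, ∑ a, ρE s a * φ s a i) :
    (∀ ρ' ∈ M, (∀ i, ∑ s, ∑ a, ρ' s a * φ s a i = ∑ s, ∑ a, ρE s a * φ s a i) →
        Wbar ρ' ≤ Wbar ρ)
    ↔
    (∃ (θ : Fin m → ℝ) (c : S → ℝ), ∀ s : S, ∃ τs : ℝ,
      (∑ a, max (((∑ i, θ i * φ s a i) + γ * ∑ s', c s' * T s' s a) / α - τs) 0 = 1) ∧
      (∀ a, ρ s a / (∑ a', ρ s a')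
          = max (((∑ i, θ i * φ s a i) + γ * ∑ s', c s' * T s' s a) / α - τs) 0) ∧
      c s = α * ((1 / 2) * ∑ a ∈ Finset.univ.filter
              (fun a => 0 < ρ s a / (∑ a', ρ s a')),
            ((((∑ i, θ i * φ s a i) + γ * ∑ s', c s' * T s' s a) / α) ^ 2 - τs ^ 2)
          + 1 / 2)) := by
  classical
  rw [hM] at hρ
  obtain ⟨hρ0, hρflow⟩ := hρ
  have hmem : ∀ ρ' : S → A → ℝ, (∀ s a, 0 ≤ ρ' s a) →
      (∀ s, ∑ a, ρ' s a = d s + γ * ∑ s', ∑ a', T s s' a' * ρ' s' a') →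
      ∀ s, 0 < ∑ a, ρ' s a := by
    intro ρ' h0 hflow s
    rw [hflow s]
    have hnn : 0 ≤ ∑ s', ∑ a', T s s' a' * ρ' s' a' :=
      Finset.sum_nonneg fun s' _ => Finset.sum_nonneg fun a' _ =>
        mul_nonneg (hT0 s s' a') (h0 s' a')
    nlinarith [hd s, mul_nonneg hγ0 hnn]
  have hμpos : ∀ s, 0 < ∑ a, ρ s a := hmem ρ hρ0 hρflow
  have hμne : ∀ s, (∑ a, ρ s a) ≠ 0 := fun s => (hμpos s).ne'
  have hπρ : ∀ s a, piF ρ s a * (∑ a', ρ s a') = ρ s a := fun s a =>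
    div_mul_cancel₀ _ (hμne s)
  have hπ0 : ∀ s a, 0 ≤ piF ρ s a := fun s a => div_nonneg (hρ0 s a) (hμpos s).le
  have hπsum : ∀ s, ∑ a, piF ρ s a = 1 := by
    intro s; unfold piF; rw [← Finset.sum_div, div_self (hμne s)]
  have hπpos : ∀ s a, ρ s a ≠ 0 → 0 < piF ρ s a := by
    intro s a h; exact div_pos (lt_of_le_of_ne (hρ0 s a) (Ne.symm h)) (hμpos s)
  -- multiplier sums vanish on feasible differences
  have L1 : ∀ (C : S → ℝ) (ρ' : S → A → ℝ),
      (∀ s, ∑ a, ρ' s a = d s + γ * ∑ s', ∑ a', T s s' a' * ρ' s' a') →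
      ∑ s, ∑ a, (C s - γ * ∑ s', C s' * T s' s a) * (ρ' s a - ρ s a) = 0 := by
    intro C ρ' hflow
    have hA : ∀ s, ∑ a, (ρ' s a - ρ s a)
        = γ * ∑ s', ∑ a', T s s' a' * (ρ' s' a' - ρ s' a') := by
      intro s
      rw [Finset.sum_sub_distrib, hflow s, hρflow s]
      have e : ∀ s' ∈ (univ : Finset S), ∑ a', T s s' a' * (ρ' s' a' - ρ s' a')
          = ∑ a', T s s' a' * ρ' s' a' - ∑ a', T s s' a' * ρ s' a' := by
        intro s' _
        rw [← Finset.sum_sub_distrib]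
        exact Finset.sum_congr rfl fun a' _ => by ring
      rw [Finset.sum_congr rfl e, Finset.sum_sub_distrib]
      ring
    have hper : ∀ s ∈ (univ : Finset S),
        ∑ a, (C s - γ * ∑ s', C s' * T s' s a) * (ρ' s a - ρ s a)
        = C s * ∑ a, (ρ' s a - ρ s a)
          - γ * ∑ a, ∑ s', C s' * (T s' s a * (ρ' s a - ρ s a)) := by
      intro s _
      rw [Finset.mul_sum, Finset.mul_sum, ← Finset.sum_sub_distrib]
      refine Finset.sum_congr rfl fun a _ => ?_
      have e : ∑ s', C s' * (T s' s a * (ρ' s a - ρ s a))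
          = (∑ s', C s' * T s' s a) * (ρ' s a - ρ s a) := by
        rw [Finset.sum_mul]
        exact Finset.sum_congr rfl fun s' _ => by ring
      rw [e]; ring
    rw [Finset.sum_congr rfl hper, Finset.sum_sub_distrib]
    have hfst : ∑ s, C s * ∑ a, (ρ' s a - ρ s a)
        = γ * ∑ s, ∑ s', ∑ a', C s * (T s s' a' * (ρ' s' a' - ρ s' a')) := by
      rw [Finset.mul_sum]
      refine Finset.sum_congr rfl fun s _ => ?_
      rw [hA s]
      have e : ∑ s', ∑ a', C s * (T s s' a' * (ρ' s' a' - ρ s' a'))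
          = C s * ∑ s', ∑ a', T s s' a' * (ρ' s' a' - ρ s' a') := by
        rw [Finset.mul_sum]
        refine Finset.sum_congr rfl fun s' _ => ?_
        rw [Finset.mul_sum]
      rw [e]; ring
    have hsnd : ∑ s, ∑ a, ∑ s', C s' * (T s' s a * (ρ' s a - ρ s a))
        = ∑ s', ∑ s, ∑ a, C s' * (T s' s a * (ρ' s a - ρ s a)) := by
      have h1 : ∀ s : S, ∑ a, ∑ s', C s' * (T s' s a * (ρ' s a - ρ s a))
          = ∑ s', ∑ a, C s' * (T s' s a * (ρ' s a - ρ s a)) := fun s => Finset.sum_comm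
      rw [Finset.sum_congr rfl (fun s _ => h1 s)]
      exact Finset.sum_comm
    rw [hfst, ← Finset.mul_sum, hsnd]
    have : ∑ s, ∑ s', ∑ a', C s * (T s s' a' * (ρ' s' a' - ρ s' a'))
        = ∑ s', ∑ s, ∑ a, C s' * (T s' s a * (ρ' s a - ρ s a)) := rfl
    rw [this]
    ring
  have L2 : ∀ (Θ : Fin m → ℝ) (ρ' : S → A → ℝ),
      (∀ i, ∑ s, ∑ a, ρ' s a * φ s a i = ∑ s, ∑ a, ρE s a * φ s a i) →
      ∑ s, ∑ a, (∑ i, Θ i * φ s a i) * (ρ' s a - ρ s a) = 0 := by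
    intro Θ ρ' hfeat'
    calc ∑ s, ∑ a, (∑ i, Θ i * φ s a i) * (ρ' s a - ρ s a)
        = ∑ s, ∑ a, ∑ i, Θ i * (ρ' s a * φ s a i - ρ s a * φ s a i) := by
          refine Finset.sum_congr rfl fun s _ => Finset.sum_congr rfl fun a _ => ?_
          rw [Finset.sum_mul]; exact Finset.sum_congr rfl fun i _ => by ring
      _ = ∑ i, ∑ s, ∑ a, Θ i * (ρ' s a * φ s a i - ρ s a * φ s a i) := by
          have h1 : ∀ s : S, ∑ a, ∑ i, Θ i * (ρ' s a * φ s a i - ρ s a * φ s a i)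
              = ∑ i, ∑ a, Θ i * (ρ' s a * φ s a i - ρ s a * φ s a i) :=
            fun s => Finset.sum_comm
          rw [Finset.sum_congr rfl (fun s _ => h1 s)]
          exact Finset.sum_comm
      _ = ∑ i, Θ i * ((∑ s, ∑ a, ρ' s a * φ s a i) - ∑ s, ∑ a, ρ s a * φ s a i) := by
          refine Finset.sum_congr rfl fun i _ => ?_
          rw [mul_sub, Finset.mul_sum, Finset.mul_sum, ← Finset.sum_sub_distrib]
          refine Finset.sum_congr rfl fun s _ => ?_
          rw [Finset.mul_sum, Finset.mul_sum, ← Finset.sum_sub_distrib]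
          exact Finset.sum_congr rfl fun a _ => by ring
      _ = 0 := Finset.sum_eq_zero fun i _ => by rw [hfeat' i, hfeat i, sub_self, mul_zero]
  constructor
  · -- optimality implies multipliers
    intro hopt
    set b : S → S × A → ℝ := fun s p => (if p.1 = s then 1 else 0) - γ * T s p.1 p.2 with hbdef
    set u : ((S ⊕ Fin m) × Bool) ⊕ (S × A) → S × A → ℝ := fun i p =>
      match i with
      | .inl (.inl s, true) => b s p
      | .inl (.inl s, false) => - b s p
      | .inl (.inr j, true) => φ p.1 p.2 j
      | .inl (.inr j, false) => - φ p.1 p.2 j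
      | .inr p₀ => if ρ p₀.1 p₀.2 = 0 then (if p = p₀ then (-1:ℝ) else 0) else 0
      with hudef
    set g : S × A → ℝ := fun p => GF ρ p.1 p.2 with hgdef
    have hfark : ∀ y : S × A → ℝ, (∀ i, ∑ p, u i p * y p ≤ 0) → ∑ p, g p * y p ≤ 0 := by
      intro y hy
      have hbsum : ∀ s, ∑ p : S × A, b s p * y p
          = (∑ a, y (s, a)) - γ * ∑ s', ∑ a', T s s' a' * y (s', a') := by
        intro s
        rw [Fintype.sum_prod_type]
        have e : ∀ s'' ∈ (univ : Finset S), ∑ a, b s (s'', a) * y (s'', a)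
            = (if s'' = s then ∑ a, y (s'', a) else 0) - γ * ∑ a, T s s'' a * y (s'', a) := by
          intro s'' _
          have h1 : ∀ a ∈ (univ : Finset A), b s (s'', a) * y (s'', a)
              = (if s'' = s then 1 else 0) * y (s'', a) - γ * (T s s'' a * y (s'', a)) := by
            intro a _
            have hb : b s (s'', a) = (if s'' = s then 1 else 0) - γ * T s s'' a := rfl
            rw [hb]; ring
          rw [Finset.sum_congr rfl h1, Finset.sum_sub_distrib, ← Finset.mul_sum,
            ← Finset.mul_sum, ite_mul, one_mul, zero_mul]
        rw [Finset.sum_congr rfl e, Finset.sum_sub_distrib,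
          Finset.sum_ite_eq' univ s (fun s'' => ∑ a, y (s'', a)), if_pos (mem_univ s),
          ← Finset.mul_sum]
      have hflow_y : ∀ s, (∑ a, y (s, a)) = γ * ∑ s', ∑ a', T s s' a' * y (s', a') := by
        intro s
        have h1 := hy (.inl (.inl s, true))
        have h2 := hy (.inl (.inl s, false))
        have e1 : ∑ p, u (.inl (.inl s, true)) p * y p = ∑ p, b s p * y p := rfl
        have e2 : ∑ p, u (.inl (.inl s, false)) p * y p = ∑ p, - (b s p * y p) := by
          refine Finset.sum_congr rfl fun p _ => ?_
          have : u (.inl (.inl s, false)) p = - b s p := rfl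
          rw [this]; ring
        rw [e1, hbsum s] at h1
        rw [e2, Finset.sum_neg_distrib, hbsum s] at h2
        linarith
      have hfeat_y : ∀ j, ∑ s, ∑ a, φ s a j * y (s, a) = 0 := by
        intro j
        have h1 := hy (.inl (.inr j, true))
        have h2 := hy (.inl (.inr j, false))
        have e0 : ∑ p : S × A, φ p.1 p.2 j * y p = ∑ s, ∑ a, φ s a j * y (s, a) := by
          rw [Fintype.sum_prod_type]
        have e1 : ∑ p, u (.inl (.inr j, true)) p * y p = ∑ p : S × A, φ p.1 p.2 j * y p := rfl
        have e2 : ∑ p, u (.inl (.inr j, false)) p * y p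
            = ∑ p : S × A, - (φ p.1 p.2 j * y p) := by
          refine Finset.sum_congr rfl fun p _ => ?_
          have : u (.inl (.inr j, false)) p = - φ p.1 p.2 j := rfl
          rw [this]; ring
        rw [e1, e0] at h1
        rw [e2, Finset.sum_neg_distrib, e0] at h2
        linarith
      have hynn : ∀ p : S × A, ρ p.1 p.2 = 0 → 0 ≤ y p := by
        intro p hp
        have h1 := hy (.inr p)
        have e1 : ∑ q, u (.inr p) q * y q = - y p := by
          have h2 : ∀ q ∈ (univ : Finset (S × A)), u (.inr p) q * y q
              = (if q = p then - y q else 0) := by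
            intro q _
            have hu : u (.inr p) q = if ρ p.1 p.2 = 0 then (if q = p then (-1:ℝ) else 0) else 0 :=
              rfl
            rw [hu, if_pos hp]
            by_cases h : q = p
            · rw [if_pos h, if_pos h]; ring
            · rw [if_neg h, if_neg h]; ring
          rw [Finset.sum_congr rfl h2, Finset.sum_ite_eq' univ p (fun q => - y q),
            if_pos (mem_univ p)]
        rw [e1] at h1
        linarith
      obtain ⟨ε, hε0, hε1, hεb⟩ := eps_lemma (fun p : S × A => ρ p.1 p.2) y
        (fun p => hρ0 p.1 p.2) hynn
      set L : ℝ := ∑ s, ∑ a, GF ρ s a * y (s, a) with hL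
      set K : ℝ := ∑ s, ∑ a, (y (s, a) - piF ρ s a * ∑ a', y (s, a')) ^ 2 / d s with hK
      have hK0 : 0 ≤ K :=
        Finset.sum_nonneg fun s _ => Finset.sum_nonneg fun a _ =>
          div_nonneg (sq_nonneg _) (hd s).le
      have hLle : ∀ t, 0 < t → t ≤ ε → L ≤ t * K := by
        intro t ht0 htε
        set ρt : S → A → ℝ := fun s a => ρ s a + t * y (s, a) with hρt
        have hρt0 : ∀ s a, 0 ≤ ρt s a := fun s a => hεb t ht0.le htε (s, a)
        have hρtμ : ∀ s, ∑ a, ρt s a = (∑ a, ρ s a) + t * ∑ a, y (s, a) := by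
          intro s; rw [Finset.sum_add_distrib, ← Finset.mul_sum]
        have hρtflow : ∀ s, ∑ a, ρt s a = d s + γ * ∑ s', ∑ a', T s s' a' * ρt s' a' := by
          intro s
          rw [hρtμ s, hρflow s, hflow_y s]
          have e : ∀ s' ∈ (univ : Finset S), ∑ a', T s s' a' * ρt s' a'
              = ∑ a', T s s' a' * ρ s' a' + t * ∑ a', T s s' a' * y (s', a') := by
            intro s' _
            rw [Finset.mul_sum, ← Finset.sum_add_distrib]
            refine Finset.sum_congr rfl fun a' _ => ?_
            have : ρt s' a' = ρ s' a' + t * y (s', a') := rfl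
            rw [this]; ring
          rw [Finset.sum_congr rfl e, Finset.sum_add_distrib, ← Finset.mul_sum]
          ring
        have hρtM : ρt ∈ M := by rw [hM]; exact ⟨hρt0, hρtflow⟩
        have hρtfeat : ∀ i, ∑ s, ∑ a, ρt s a * φ s a i = ∑ s, ∑ a, ρE s a * φ s a i := by
          intro i
          have e : ∀ s ∈ (univ : Finset S), ∑ a, ρt s a * φ s a i
              = ∑ a, ρ s a * φ s a i + t * ∑ a, φ s a i * y (s, a) := by
            intro s _
            rw [Finset.mul_sum, ← Finset.sum_add_distrib]
            refine Finset.sum_congr rfl fun a _ => ?_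
            have : ρt s a = ρ s a + t * y (s, a) := rfl
            rw [this]; ring
          rw [Finset.sum_congr rfl e, Finset.sum_add_distrib, ← Finset.mul_sum, hfeat_y i,
            mul_zero, add_zero]
          exact hfeat i
        have hμtpos := hmem ρt hρt0 hρtflow
        have hμtd : ∀ s, d s ≤ ∑ a, ρt s a := by
          intro s
          rw [hρtflow s]
          have hnn : 0 ≤ ∑ s', ∑ a', T s s' a' * ρt s' a' :=
            Finset.sum_nonneg fun s' _ => Finset.sum_nonneg fun a' _ =>
              mul_nonneg (hT0 s s' a') (hρt0 s' a')
          nlinarith [mul_nonneg hγ0 hnn]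
        have hexp := wbar_expand ρ ρt hμne (fun s => (hμtpos s).ne')
        have hopt' := hopt ρt hρtM hρtfeat
        have hnum : ∀ s a, ρt s a - piF ρ s a * ∑ a', ρt s a'
            = t * (y (s, a) - piF ρ s a * ∑ a', y (s, a')) := by
          intro s a
          rw [hρtμ s]
          have hr : ρt s a = ρ s a + t * y (s, a) := rfl
          rw [hr]
          have h1 := hπρ s a
          calc ρ s a + t * y (s, a) - piF ρ s a * ((∑ a', ρ s a') + t * ∑ a', y (s, a'))
              = t * (y (s, a) - piF ρ s a * ∑ a', y (s, a'))
                + ((piF ρ s a * ∑ a', ρ s a') - piF ρ s a * (∑ a', ρ s a')) + (ρ s a - piF ρ s a * (∑ a', ρ s a')) := by ring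
            _ = t * (y (s, a) - piF ρ s a * ∑ a', y (s, a')) := by rw [h1]; ring
        have hfirst : ∑ s, ∑ a, GF ρ s a * (ρt s a - ρ s a) = t * L := by
          rw [hL, Finset.mul_sum]
          refine Finset.sum_congr rfl fun s _ => ?_
          rw [Finset.mul_sum]
          refine Finset.sum_congr rfl fun a _ => ?_
          have : ρt s a = ρ s a + t * y (s, a) := rfl
          rw [this]; ring
        have hsq_le : ∑ s, ∑ a, (ρt s a - piF ρ s a * ∑ a', ρt s a') ^ 2 / (∑ a', ρt s a')
            ≤ t ^ 2 * K := by
          have e : ∀ s ∈ (univ : Finset S), ∑ a, (ρt s a - piF ρ s a * ∑ a', ρt s a') ^ 2 / (∑ a', ρt s a')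
              ≤ ∑ a, t ^ 2 * ((y (s, a) - piF ρ s a * ∑ a', y (s, a')) ^ 2 / d s) := by
            intro s _
            refine Finset.sum_le_sum fun a _ => ?_
            rw [hnum s a, mul_pow, mul_div_assoc]
            exact mul_le_mul_of_nonneg_left
              (div_le_div_of_nonneg_left (sq_nonneg _) (hd s) (hμtd s)) (sq_nonneg t)
          calc ∑ s, ∑ a, (ρt s a - piF ρ s a * ∑ a', ρt s a') ^ 2 / (∑ a', ρt s a')
              ≤ ∑ s, ∑ a, t ^ 2 * ((y (s, a) - piF ρ s a * ∑ a', y (s, a')) ^ 2 / d s) :=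
                Finset.sum_le_sum e
            _ = t ^ 2 * K := by
                rw [hK, Finset.mul_sum]
                exact Finset.sum_congr rfl fun s _ => (Finset.mul_sum _ _ _).symm
        rw [hexp, hfirst] at hopt'
        have h2 : t * L ≤ t ^ 2 * K := by linarith
        have h3 : t * L ≤ t * (t * K) := by nlinarith
        exact (mul_le_mul_iff_right₀ ht0).1 h3
      have hL0 : L ≤ 0 := le_zero_of_small L K ε hK0 hε0 hLle
      have hfin : ∑ p : S × A, g p * y p = L := by
        rw [hL, Fintype.sum_prod_type]
      rw [hfin]
      exact hL0
    obtain ⟨lam, hlam0, hrep⟩ := farkas u g hfark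
    set Cv : S → ℝ := fun s => lam (.inl (.inl s, true)) - lam (.inl (.inl s, false)) with hCv
    set Θv : Fin m → ℝ := fun j => lam (.inl (.inr j, true)) - lam (.inl (.inr j, false)) with hΘv
    set lamp : S → A → ℝ := fun s a => if ρ s a = 0 then lam (.inr (s, a)) else 0 with hlampd
    have hlamp0 : ∀ s a, 0 ≤ lamp s a := by
      intro s a
      simp only [hlampd]
      split
      · exact hlam0 _
      · exact le_rfl
    have hlampz : ∀ s a, ρ s a ≠ 0 → lamp s a = 0 := by
      intro s a h; simp only [hlampd, if_neg h]
    have hstat : ∀ s a, GF ρ s a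
        = (Cv s - γ * ∑ s', Cv s' * T s' s a) + (∑ j, Θv j * φ s a j) - lamp s a := by
      intro s a
      have h0 := hrep (s, a)
      rw [Fintype.sum_sum_type] at h0
      have hA1 : ∑ j : (S ⊕ Fin m) × Bool, lam (.inl j) * u (.inl j) (s, a)
          = ∑ k : S ⊕ Fin m, (lam (.inl (k, true)) * u (.inl (k, true)) (s, a)
            + lam (.inl (k, false)) * u (.inl (k, false)) (s, a)) := by
        rw [Fintype.sum_prod_type]
        exact Finset.sum_congr rfl fun k _ => Fintype.sum_bool _
      have hA2 : ∑ k : S ⊕ Fin m, (lam (.inl (k, true)) * u (.inl (k, true)) (s, a)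
            + lam (.inl (k, false)) * u (.inl (k, false)) (s, a))
          = (∑ s', Cv s' * b s' (s, a)) + ∑ j, Θv j * φ s a j := by
        rw [Fintype.sum_sum_type]
        congr 1
        · refine Finset.sum_congr rfl fun s' _ => ?_
          have e1 : u (.inl (.inl s', true)) (s, a) = b s' (s, a) := rfl
          have e2 : u (.inl (.inl s', false)) (s, a) = - b s' (s, a) := rfl
          have e3 : Cv s' = lam (.inl (.inl s', true)) - lam (.inl (.inl s', false)) := rfl
          rw [e1, e2, e3]; ring
        · refine Finset.sum_congr rfl fun j _ => ?_
          have e1 : u (.inl (.inr j, true)) (s, a) = φ s a j := rfl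
          have e2 : u (.inl (.inr j, false)) (s, a) = - φ s a j := rfl
          have e3 : Θv j = lam (.inl (.inr j, true)) - lam (.inl (.inr j, false)) := rfl
          rw [e1, e2, e3]; ring
      have hA3 : ∑ s', Cv s' * b s' (s, a) = Cv s - γ * ∑ s', Cv s' * T s' s a := by
        have e : ∀ s' ∈ (univ : Finset S), Cv s' * b s' (s, a)
            = (if s = s' then Cv s' else 0) - γ * (Cv s' * T s' s a) := by
          intro s' _
          have hb : b s' (s, a) = (if s = s' then 1 else 0) - γ * T s' s a := rfl
          rw [hb]
          by_cases h : s = s'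
          · rw [if_pos h, if_pos h]; ring
          · rw [if_neg h, if_neg h]; ring
        rw [Finset.sum_congr rfl e, Finset.sum_sub_distrib,
          Finset.sum_ite_eq univ s Cv, if_pos (mem_univ s), ← Finset.mul_sum]
      have hA4 : ∑ p₀ : S × A, lam (.inr p₀) * u (.inr p₀) (s, a) = - lamp s a := by
        rw [Finset.sum_eq_single (s, a)]
        · have hu : u (.inr (s, a)) (s, a)
              = if ρ s a = 0 then (if ((s, a) : S × A) = (s, a) then (-1:ℝ) else 0) else 0 := rfl
          rw [hu, if_pos rfl]
          have hl : lamp s a = if ρ s a = 0 then lam (.inr (s, a)) else 0 := rfl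
          rw [hl]
          by_cases h : ρ s a = 0
          · rw [if_pos h, if_pos h]; ring
          · rw [if_neg h, if_neg h]; ring
        · intro p₀ _ hne
          have hu : u (.inr p₀) (s, a)
              = if ρ p₀.1 p₀.2 = 0 then (if ((s, a) : S × A) = p₀ then (-1:ℝ) else 0) else 0 := rfl
          rw [hu]
          by_cases h : ρ p₀.1 p₀.2 = 0
          · rw [if_pos h, if_neg (fun hh => hne hh.symm), mul_zero]
          · rw [if_neg h, mul_zero]
        · intro h
          exact absurd (mem_univ _) h
      rw [hA1, hA2, hA3, hA4] at h0
      have hgg : g (s, a) = GF ρ s a := rfl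
      rw [hgg] at h0
      linarith [h0]
    -- construct the certificate
    set QT : S → A → ℝ :=
      fun s a => (-(∑ j, Θv j * φ s a j) + γ * ∑ s', Cv s' * T s' s a) / 2 with hQTd
    set τv : S → ℝ := fun s => (Cv s - 1 - NF ρ s) / 2 with hτvd
    have key2 : ∀ s a,
        ((∑ i, -(α / 2) * Θv i * φ s a i) + γ * ∑ s', α / 2 * Cv s' * T s' s a) / α
        = QT s a := by
      intro s a
      have e1 : ∑ i, -(α / 2) * Θv i * φ s a i = -(α / 2) * ∑ j, Θv j * φ s a j := by
        rw [Finset.mul_sum]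
        exact Finset.sum_congr rfl fun i _ => by ring
      have e2 : ∑ s', α / 2 * Cv s' * T s' s a = α / 2 * ∑ s', Cv s' * T s' s a := by
        rw [Finset.mul_sum]
        exact Finset.sum_congr rfl fun s' _ => by ring
      have e3 : QT s a = (-(∑ j, Θv j * φ s a j) + γ * ∑ s', Cv s' * T s' s a) / 2 := rfl
      rw [e1, e2, e3]
      field_simp
    have hQτ : ∀ s a, QT s a - τv s = piF ρ s a - lamp s a / 2 := by
      intro s a
      have h1 := hstat s a
      have hG : GF ρ s a = 1 - 2 * piF ρ s a + NF ρ s := rfl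
      rw [hG] at h1
      have h2 : QT s a = (-(∑ j, Θv j * φ s a j) + γ * ∑ s', Cv s' * T s' s a) / 2 := rfl
      have h3 : τv s = (Cv s - 1 - NF ρ s) / 2 := rfl
      rw [h2, h3]
      linear_combination h1 / 2
    have hii : ∀ s a, piF ρ s a = max (QT s a - τv s) 0 := by
      intro s a
      rcases eq_or_ne (ρ s a) 0 with h | h
      · have hp0 : piF ρ s a = 0 := by simp [piF, h]
        rw [hp0, hQτ s a, hp0]
        have h4 := hlamp0 s a
        exact (max_eq_right (by linarith)).symm
      · have hz := hlampz s a h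
        rw [hQτ s a, hz]
        have hp := hπ0 s a
        rw [max_eq_left (by linarith)]
        ring
    refine ⟨fun j => -(α / 2) * Θv j, fun s => α / 2 * Cv s, fun s => ⟨τv s, ?_, ?_, ?_⟩⟩
    · have e : ∀ a ∈ (univ : Finset A),
          max (((∑ i, -(α / 2) * Θv i * φ s a i) + γ * ∑ s', α / 2 * Cv s' * T s' s a) / α
            - τv s) 0 = piF ρ s a := by
        intro a _
        rw [key2 s a]
        exact (hii s a).symm
      rw [Finset.sum_congr rfl e]
      exact hπsum s
    · intro a
      rw [key2 s a]
      exact hii s a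
    · have hfil := filter_sum (fun a => ρ s a / (∑ a', ρ s a')) (QT s) (τv s)
        (hπsum s) (hπ0 s)
        (fun a hpa => by
          have hpa' : 0 < piF ρ s a := hpa
          have h := hQτ s a
          have hz : lamp s a = 0 := by
            refine hlampz s a fun h0 => ?_
            have hz2 : piF ρ s a = 0 := by simp [piF, h0]
            rw [hz2] at hpa'
            exact lt_irrefl 0 hpa'
          rw [hz] at h
          show QT s a = piF ρ s a + τv s
          linarith)
      have hsummand : ∀ a ∈ Finset.univ.filter (fun a => 0 < ρ s a / (∑ a', ρ s a')),
          (((∑ i, -(α / 2) * Θv i * φ s a i) + γ * ∑ s', α / 2 * Cv s' * T s' s a) / α) ^ 2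
            - τv s ^ 2 = (QT s a) ^ 2 - (τv s) ^ 2 := by
        intro a _
        rw [key2 s a]
      rw [Finset.sum_congr rfl hsummand, hfil]
      have hNs : (∑ a, (ρ s a / ∑ a', ρ s a') ^ 2) = NF ρ s := rfl
      rw [hNs]
      have h3 : τv s = (Cv s - 1 - NF ρ s) / 2 := rfl
      rw [h3]
      ring
  · -- multipliers imply optimality
    rintro ⟨θh, ch, hcond⟩ ρ' hρ'M hρ'feat
    choose τ hτ1 hτ2 hτ3 using hcond
    rw [hM] at hρ'M
    obtain ⟨hρ'0, hρ'flow⟩ := hρ'M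
    have hμ'pos := hmem ρ' hρ'0 hρ'flow
    set q : S → A → ℝ := fun s a =>
      ((∑ i, θh i * φ s a i) + γ * ∑ s', ch s' * T s' s a) / α with hqdef
    have hqeq : ∀ s a, ((∑ i, θh i * φ s a i) + γ * ∑ s', ch s' * T s' s a) / α = q s a :=
      fun s a => rfl
    simp only [hqeq] at hτ1 hτ2 hτ3
    -- from complementarity, on the support q - τ equals the policy
    have hqpi : ∀ s a, 0 < piF ρ s a → q s a = piF ρ s a + τ s := by
      intro s a hpa
      have h2 : piF ρ s a = max (q s a - τ s) 0 := hτ2 s a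
      rcases max_cases (q s a - τ s) 0 with ⟨hmx, _⟩ | ⟨hmx, _⟩
      · rw [hmx] at h2; linarith
      · rw [hmx] at h2; rw [h2] at hpa; exact absurd hpa (lt_irrefl 0)
    have hCs : ∀ s, 2 / α * ch s = NF ρ s + 2 * τ s + 1 := by
      intro s
      have hfil := filter_sum (fun a => ρ s a / (∑ a', ρ s a')) (q s) (τ s)
        (hπsum s) (hπ0 s) (hqpi s)
      have h3 := hτ3 s
      rw [hfil] at h3
      have hNs : NF ρ s = ∑ a, (ρ s a / ∑ a', ρ s a') ^ 2 := rfl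
      rw [← hNs] at h3
      rw [h3]; field_simp
    set lamb : S → A → ℝ := fun s a => 2 * (max (q s a - τ s) 0 - (q s a - τ s)) with hlambdef
    have hlamb0 : ∀ s a, 0 ≤ lamb s a := by
      intro s a
      have := le_max_left (q s a - τ s) 0
      simp only [hlambdef]; linarith
    have hlambρ : ∀ s a, lamb s a * ρ s a = 0 := by
      intro s a
      rcases eq_or_ne (ρ s a) 0 with h | h
      · rw [h, mul_zero]
      · have hp : 0 < piF ρ s a := hπpos s a h
        have hq' := hqpi s a hp
        have : lamb s a = 0 := by
          simp only [hlambdef]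
          have h2 : piF ρ s a = max (q s a - τ s) 0 := hτ2 s a
          rw [← h2, hq']; ring
        rw [this, zero_mul]
    set Θ2 : Fin m → ℝ := fun i => 2 / α * θh i with hΘ2
    set C2 : S → ℝ := fun s => 2 / α * ch s with hC2
    have hq2' : ∀ s a, (∑ i, Θ2 i * φ s a i) + γ * ∑ s', C2 s' * T s' s a = 2 * q s a := by
      intro s a
      have e1 : ∑ i, Θ2 i * φ s a i = 2 / α * ∑ i, θh i * φ s a i := by
        rw [Finset.mul_sum]
        exact Finset.sum_congr rfl fun i _ => by simp only [hΘ2]; ring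
      have e2 : ∑ s', C2 s' * T s' s a = 2 / α * ∑ s', ch s' * T s' s a := by
        rw [Finset.mul_sum]
        exact Finset.sum_congr rfl fun s' _ => by simp only [hC2]; ring
      rw [e1, e2]
      have : q s a = ((∑ i, θh i * φ s a i) + γ * ∑ s', ch s' * T s' s a) / α := rfl
      rw [this]
      field_simp
    have hGstat : ∀ s a, GF ρ s a
        = (C2 s - γ * ∑ s', C2 s' * T s' s a) - (∑ i, Θ2 i * φ s a i) - lamb s a := by
      intro s a
      have h2 : piF ρ s a = max (q s a - τ s) 0 := hτ2 s a
      have hC := hCs s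
      have hqq := hq2' s a
      have hl : lamb s a = 2 * (max (q s a - τ s) 0 - (q s a - τ s)) := rfl
      have hC2s : C2 s = 2 / α * ch s := rfl
      have hG : GF ρ s a = 1 - 2 * piF ρ s a + NF ρ s := rfl
      rw [hG, h2, hl, hC2s]
      linarith
    have hΔ : ∑ s, ∑ a, GF ρ s a * (ρ' s a - ρ s a)
        = - ∑ s, ∑ a, lamb s a * (ρ' s a - ρ s a) := by
      have e1 : ∀ s ∈ (univ : Finset S), ∑ a, GF ρ s a * (ρ' s a - ρ s a)
          = ∑ a, ((C2 s - γ * ∑ s', C2 s' * T s' s a) * (ρ' s a - ρ s a))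
            - ∑ a, ((∑ i, Θ2 i * φ s a i) * (ρ' s a - ρ s a))
            - ∑ a, (lamb s a * (ρ' s a - ρ s a)) := by
        intro s _
        rw [← Finset.sum_sub_distrib, ← Finset.sum_sub_distrib]
        exact Finset.sum_congr rfl fun a _ => by rw [hGstat s a]; ring
      rw [Finset.sum_congr rfl e1, Finset.sum_sub_distrib, Finset.sum_sub_distrib,
        L1 C2 ρ' hρ'flow, L2 Θ2 ρ' hρ'feat]
      ring
    have hlambsum : ∑ s, ∑ a, lamb s a * (ρ' s a - ρ s a) = ∑ s, ∑ a, lamb s a * ρ' s a := by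
      refine Finset.sum_congr rfl fun s _ => Finset.sum_congr rfl fun a _ => ?_
      rw [mul_sub, hlambρ s a, sub_zero]
    have hlamb' : 0 ≤ ∑ s, ∑ a, lamb s a * ρ' s a :=
      Finset.sum_nonneg fun s _ => Finset.sum_nonneg fun a _ =>
        mul_nonneg (hlamb0 s a) (hρ'0 s a)
    have hexp := wbar_expand ρ ρ' hμne (fun s => (hμ'pos s).ne')
    have hsq : 0 ≤ ∑ s, ∑ a, (ρ' s a - piF ρ s a * ∑ a', ρ' s a') ^ 2 / (∑ a', ρ' s a') :=
      Finset.sum_nonneg fun s _ => Finset.sum_nonneg fun a _ =>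
        div_nonneg (sq_nonneg _) (hμ'pos s).le
    rw [hexp, hΔ, hlambsum]
    linarith
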